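/- Euler's pentagonal number theorem: ∏_{k≥1}(1-q^k) = ∑_{m∈ℤ} (-1)^m q^{m(3m-1)/2} as formal power series. -/

import Mathlib

open PowerSeries Finset

namespace PentAux

/-- `cc k = k*(k-1)/2`. -/
def cc : ℕ → ℕ
  | 0 => 0
  | k + 1 => cc k + k

/-- `AA k = k*(3k+1)/2`. -/
def AA : ℕ → ℕ
  | 0 => 0
  | k + 1 => AA k + 3 * k + 2

/-- `BB k = k*(3k-1)/2`. -/
def BB : ℕ → ℕ
  | 0 => 0
  | k + 1 => BB k + 3 * k + 1

lemma AA_eq_BB_add (k : ℕ) : AA k = BB k + k := by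
  induction k with
  | zero => rfl
  | succ k ih => simp [AA, BB, ih]; omega

lemma BB_eq (k : ℕ) : BB k = k * k + cc k := by
  induction k with
  | zero => rfl
  | succ k ih => simp [BB, cc, ih]; ring

lemma le_BB (k : ℕ) : k ≤ BB k := by
  induction k with
  | zero => simp
  | succ k ih => simp [BB]; omega

lemma le_AA (k : ℕ) : k ≤ AA k := by
  rw [AA_eq_BB_add]; omega

lemma AA_cast (k : ℕ) : (AA k : ℤ) * 2 = k * (3 * k + 1) := by
  induction k with
  | zero => rfl
  | succ k ih => push_cast [AA]; push_cast at ih; linarith [ih]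

lemma BB_cast (k : ℕ) : (BB k : ℤ) * 2 = k * (3 * k - 1) := by
  induction k with
  | zero => rfl
  | succ k ih => push_cast [BB]; push_cast at ih; linarith [ih]

noncomputable def sgn (k : ℕ) : PowerSeries ℤ := C ((-1 : ℤ) ^ k)

lemma sgn_succ (k : ℕ) : sgn (k + 1) = - sgn k := by
  simp [sgn, pow_succ]

noncomputable def TT (n k : ℕ) : PowerSeries ℤ :=
  sgn k * ((∏ j ∈ Icc (k + 1) n, (1 - (X : PowerSeries ℤ) ^ j)) * X ^ ((n + 1) * k + cc k))

noncomputable def UU (n k : ℕ) : PowerSeries ℤ :=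
  sgn k * ((∏ j ∈ Icc k n, (1 - (X : PowerSeries ℤ) ^ j)) * X ^ ((n + 1) * k + cc k))

noncomputable def Pent (n : ℕ) : PowerSeries ℤ :=
  (∑ k ∈ range (n + 1), sgn k * (X : PowerSeries ℤ) ^ (AA k)) +
    ∑ k ∈ range n, sgn (k + 1) * (X : PowerSeries ℤ) ^ (BB (k + 1))

lemma UU_zero (n : ℕ) : UU n 0 = 0 := by
  have h0 : (0 : ℕ) ∈ Icc 0 n := by simp
  have : (∏ j ∈ Icc 0 n, (1 - (X : PowerSeries ℤ) ^ j)) = 0 :=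
    Finset.prod_eq_zero h0 (by simp)
  simp [UU, this]

lemma UU_top (n : ℕ) : UU n (n + 1) = sgn (n + 1) * (X : PowerSeries ℤ) ^ (BB (n + 1)) := by
  have h : Icc (n + 1) n = (∅ : Finset ℕ) := Finset.Icc_eq_empty (by omega)
  have he : (n + 1) * (n + 1) + cc (n + 1) = BB (n + 1) := by rw [BB_eq]
  rw [UU, h, Finset.prod_empty, one_mul, he]

lemma TT_top (n : ℕ) : TT (n + 1) (n + 1) = sgn (n + 1) * (X : PowerSeries ℤ) ^ (AA (n + 1)) := by
  have h : Icc (n + 2) (n + 1) = (∅ : Finset ℕ) := Finset.Icc_eq_empty (by omega)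
  have he : (n + 1 + 1) * (n + 1) + cc (n + 1) = AA (n + 1) := by
    rw [AA_eq_BB_add, BB_eq]; ring
  rw [TT, h, Finset.prod_empty, one_mul, he]

lemma TT_zero (n : ℕ) :
    TT n 0 = ∏ j ∈ Icc 1 n, (1 - (X : PowerSeries ℤ) ^ j) := by
  simp [TT, cc, sgn]

lemma TT_step (n k : ℕ) (hk : k ≤ n) :
    TT (n + 1) k = TT n k + (UU n (k + 1) - UU n k) := by
  have hprod : (∏ j ∈ Icc (k + 1) (n + 1), (1 - (X : PowerSeries ℤ) ^ j)) =
      (∏ j ∈ Icc (k + 1) n, (1 - (X : PowerSeries ℤ) ^ j)) * (1 - X ^ (n + 1)) :=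
    Finset.prod_Icc_succ_top (by omega) _
  have hprod2 : (∏ j ∈ Icc k n, (1 - (X : PowerSeries ℤ) ^ j)) =
      (1 - X ^ k) * ∏ j ∈ Icc (k + 1) n, (1 - (X : PowerSeries ℤ) ^ j) := by
    rw [Finset.Icc_eq_cons_Ioc hk, Finset.prod_cons, Finset.Icc_add_one_left_eq_Ioc]
  have e1 : (n + 1 + 1) * k + cc k = ((n + 1) * k + cc k) + k := by ring
  have e2 : (n + 1) * (k + 1) + cc (k + 1) = ((n + 1) * k + cc k) + (n + 1 + k) := by
    simp [cc]; ring
  rw [TT, TT, UU, UU, hprod, hprod2, e1, e2, sgn_succ, pow_add, pow_add, pow_add]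
  ring

lemma shanks (n : ℕ) : (∑ k ∈ range (n + 1), TT n k) = Pent n := by
  induction n with
  | zero =>
      simp [TT, Pent, AA, cc, sgn]
  | succ n ih =>
      rw [Finset.sum_range_succ, TT_top]
      have hsum : (∑ k ∈ range (n + 1), TT (n + 1) k)
          = (∑ k ∈ range (n + 1), TT n k) + ∑ k ∈ range (n + 1), (UU n (k + 1) - UU n k) := by
        rw [← Finset.sum_add_distrib]
        refine Finset.sum_congr rfl fun k hk => ?_
        exact TT_step n k (by simpa using Nat.lt_succ_iff.mp (Finset.mem_range.mp hk))
      rw [hsum, Finset.sum_range_sub (fun k => UU n k), UU_zero, UU_top, sub_zero, ih]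
      show Pent n + _ + _ = Pent (n + 1)
      simp only [Pent, Finset.sum_range_succ]
      ring

lemma coeff_TT_ne (n k : ℕ) (hk : k ≠ 0) : coeff n (TT n k) = 0 := by
  have hdvd : (X : PowerSeries ℤ) ^ (n + 1) ∣ TT n k := by
    have hTT : TT n k = X ^ ((n + 1) * k + cc k)
        * (sgn k * ∏ j ∈ Icc (k + 1) n, (1 - (X : PowerSeries ℤ) ^ j)) := by
      rw [TT]; ring
    refine dvd_trans (pow_dvd_pow X ?_) ⟨_, hTT⟩
    have : n + 1 ≤ (n + 1) * k := Nat.le_mul_of_pos_right _ (Nat.pos_of_ne_zero hk)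
    omega
  exact (PowerSeries.X_pow_dvd_iff.mp hdvd) n (by omega)

end PentAux

open PentAux

theorem pentagonal_number_theorem (n : ℕ) :
    PowerSeries.coeff n (∏ k ∈ Finset.Icc 1 n, (1 - (PowerSeries.X : PowerSeries ℤ) ^ k)) =
      ∑ m ∈ Finset.Icc (-(n : ℤ) - 1) ((n : ℤ) + 1),
        if m * (3 * m - 1) / 2 = (n : ℤ) then (-1 : ℤ) ^ m.natAbs else 0 := by
  -- LHS = coeff n (Pent (n+1))
  have hL : PowerSeries.coeff n (∏ k ∈ Finset.Icc 1 n, (1 - (PowerSeries.X : PowerSeries ℤ) ^ k))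
      = coeff n (Pent (n + 1)) := by
    have h1 : coeff n (∏ k ∈ Finset.Icc 1 n, (1 - (PowerSeries.X : PowerSeries ℤ) ^ k))
        = coeff n (∑ k ∈ range (n + 1), TT n k) := by
      rw [map_sum, Finset.sum_eq_single 0]
      · rw [TT_zero]
      · intro k _ hk0; exact coeff_TT_ne n k hk0
      · intro h; exact absurd (Finset.mem_range.mpr (by omega)) h
    rw [h1, shanks]
    have hP : Pent (n + 1) = Pent n + (sgn (n + 1) * X ^ (AA (n + 1))
        + sgn (n + 1) * X ^ (BB (n + 1))) := by
      simp only [Pent, Finset.sum_range_succ]; ring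
    rw [hP, map_add, map_add]
    have hA : coeff n ((X : PowerSeries ℤ) ^ (AA (n + 1))) = 0 := by
      rw [coeff_X_pow, if_neg]; have := le_AA (n + 1); omega
    have hB : coeff n ((X : PowerSeries ℤ) ^ (BB (n + 1))) = 0 := by
      rw [coeff_X_pow, if_neg]; have := le_BB (n + 1); omega
    simp only [sgn, coeff_C_mul, hA, hB, mul_zero, add_zero]
  rw [hL]
  -- compute coeff n (Pent (n+1))
  have hPc : coeff n (Pent (n + 1)) =
      (∑ k ∈ range (n + 2), if n = AA k then (-1 : ℤ) ^ k else 0) +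
        ∑ k ∈ range (n + 1), if n = BB (k + 1) then (-1 : ℤ) ^ (k + 1) else 0 := by
    simp only [Pent, map_add, map_sum, sgn, coeff_C_mul_X_pow]
  rw [hPc]
  -- split and reindex RHS
  have hsplit : Finset.Icc (-(n : ℤ) - 1) ((n : ℤ) + 1)
      = Finset.Icc (-(n : ℤ) - 1) 0 ∪ Finset.Ioc (0 : ℤ) ((n : ℤ) + 1) := by
    ext m
    simp only [Finset.mem_Icc, Finset.mem_union, Finset.mem_Ioc]
    omega
  have hdisj : Disjoint (Finset.Icc (-(n : ℤ) - 1) 0) (Finset.Ioc (0 : ℤ) ((n : ℤ) + 1)) := by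
    rw [Finset.disjoint_left]
    intro a ha ha'
    simp only [Finset.mem_Icc, Finset.mem_Ioc] at ha ha'
    omega
  rw [hsplit, Finset.sum_union hdisj]
  congr 1
  · -- negative part
    have himg : Finset.Icc (-(n : ℤ) - 1) 0 = (range (n + 2)).image (fun k : ℕ => -(k : ℤ)) := by
      ext m
      simp only [Finset.mem_Icc, Finset.mem_image, Finset.mem_range]
      constructor
      · rintro ⟨h1, h2⟩; exact ⟨(-m).toNat, by omega, by omega⟩
      · rintro ⟨k, hk, rfl⟩; omega
    rw [himg, Finset.sum_image (fun a _ b _ h => by omega)]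
    refine Finset.sum_congr rfl fun k _ => ?_
    have hdiv : (-(k : ℤ)) * (3 * (-(k : ℤ)) - 1) / 2 = (AA k : ℤ) := by
      rw [show (-(k : ℤ)) * (3 * (-(k : ℤ)) - 1) = (AA k : ℤ) * 2 by
        linear_combination -AA_cast k]
      exact Int.mul_ediv_cancel _ two_ne_zero
    rw [hdiv]
    have habs : ((-(k : ℤ)).natAbs) = k := by simp
    rw [habs]
    by_cases h : (AA k : ℤ) = (n : ℤ)
    · rw [if_pos h, if_pos (by exact_mod_cast h.symm)]
    · rw [if_neg h, if_neg (by intro hc; exact h (by exact_mod_cast hc.symm))]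
  · -- positive part
    have himg : Finset.Ioc (0 : ℤ) ((n : ℤ) + 1)
        = (range (n + 1)).image (fun k : ℕ => (k : ℤ) + 1) := by
      ext m
      simp only [Finset.mem_Ioc, Finset.mem_image, Finset.mem_range]
      constructor
      · rintro ⟨h1, h2⟩; exact ⟨(m - 1).toNat, by omega, by omega⟩
      · rintro ⟨k, hk, rfl⟩; omega
    rw [himg, Finset.sum_image (fun a _ b _ h => by omega)]
    refine Finset.sum_congr rfl fun k _ => ?_
    have hdiv : ((k : ℤ) + 1) * (3 * ((k : ℤ) + 1) - 1) / 2 = (BB (k + 1) : ℤ) := by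
      rw [show ((k : ℤ) + 1) * (3 * ((k : ℤ) + 1) - 1) = (BB (k + 1) : ℤ) * 2 by
        have := BB_cast (k + 1); push_cast at this ⊢; linear_combination -this]
      exact Int.mul_ediv_cancel _ two_ne_zero
    rw [hdiv]
    have habs : (((k : ℤ) + 1).natAbs) = k + 1 := by
      rw [show ((k : ℤ) + 1) = ((k + 1 : ℕ) : ℤ) by push_cast; ring, Int.natAbs_natCast]
    rw [habs]
    by_cases h : (BB (k + 1) : ℤ) = (n : ℤ)
    · rw [if_pos h, if_pos (by exact_mod_cast h.symm)]
    · rw [if_neg h, if_neg (by intro hc; exact h (by exact_mod_cast hc.symm))]
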